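/- Let s be a smooth and decomposable probabilistic circuit over variables X whose sum-node weights are positive and whose leaves are Gaussian densities. Then the distribution computed by s can be written as a finite mixture Σ_{t=1}^{τ} (∏_{(k,j)∈T_t} w_{kj}) · ∏_{i=1}^n p_t(X_i), where the sum ranges over all induced trees T_t of the circuit and each p_t(X_i) is a univariate Gaussian leaf; moreover the mixture coefficients ∏ w_{kj} are positive and sum to 1 when the circuit is normalized. -/

import Mathlib

open Real

/-- One-dimensional Gaussian density. -/
noncomputable def gaussPdf (m s x : ℝ) : ℝ :=
  (s * Real.sqrt (2 * π))⁻¹ * Real.exp (-(x - m)^2 / (2 * s^2))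

/-- A probabilistic circuit over `n` variables with (binary) weighted sum nodes,
(binary) product nodes and univariate Gaussian leaves. -/
inductive PC (n : ℕ) : Type
  | leaf (i : Fin n) (m s : ℝ) : PC n
  | sum (w₁ w₂ : ℝ) (l r : PC n) : PC n
  | prod (l r : PC n) : PC n

namespace PC

variable {n : ℕ}

/-- Scope of a node. -/
def scope : PC n → Finset (Fin n)
  | leaf i _ _ => {i}
  | sum _ _ l r => scope l ∪ scope r
  | prod l r => scope l ∪ scope r

/-- Smoothness: children of sum nodes share the same scope. -/
def Smooth : PC n → Prop
  | leaf _ _ _ => True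
  | sum _ _ l r => scope l = scope r ∧ Smooth l ∧ Smooth r
  | prod l r => Smooth l ∧ Smooth r

/-- Decomposability: children of product nodes have disjoint scopes. -/
def Decomposable : PC n → Prop
  | leaf _ _ _ => True
  | sum _ _ l r => Decomposable l ∧ Decomposable r
  | prod l r => Disjoint (scope l) (scope r) ∧ Decomposable l ∧ Decomposable r

/-- All sum weights are strictly positive. -/
def PosWeights : PC n → Prop
  | leaf _ _ _ => True
  | sum w₁ w₂ l r => 0 < w₁ ∧ 0 < w₂ ∧ PosWeights l ∧ PosWeights r
  | prod l r => PosWeights l ∧ PosWeights r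

/-- Normalized circuit: the weights of every sum node sum to one. -/
def Normalized : PC n → Prop
  | leaf _ _ _ => True
  | sum w₁ w₂ l r => w₁ + w₂ = 1 ∧ Normalized l ∧ Normalized r
  | prod l r => Normalized l ∧ Normalized r

/-- Evaluation of the circuit. -/
noncomputable def eval : PC n → (Fin n → ℝ) → ℝ
  | leaf i m s, x => gaussPdf m s (x i)
  | sum w₁ w₂ l r, x => w₁ * eval l x + w₂ * eval r x
  | prod l r, x => eval l x * eval r x

/-- Number of induced trees of the circuit. -/
def numTrees : PC n → ℕ
  | leaf _ _ _ => 1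
  | sum _ _ l r => numTrees l + numTrees r
  | prod l r => numTrees l * numTrees r

theorem aux {n : ℕ} (c : PC n)
    (hsmooth : c.Smooth) (hdec : c.Decomposable) (hpos : c.PosWeights) :
    ∃ (w : Fin c.numTrees → ℝ) (m s : Fin c.numTrees → Fin n → ℝ),
      (∀ t, 0 < w t) ∧
      (c.Normalized → ∑ t, w t = 1) ∧
      ∀ x : Fin n → ℝ,
        c.eval x = ∑ t, w t * ∏ i ∈ c.scope, gaussPdf (m t i) (s t i) (x i) := by
  induction c with
  | leaf i m s =>
    refine ⟨fun _ => 1, fun _ _ => m, fun _ _ => s, fun _ => one_pos, fun _ => by show ∑ _t : Fin 1, (1:ℝ) = 1; simp, ?_⟩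
    intro x
    show _ = ∑ _t : Fin 1, (1:ℝ) * ∏ j ∈ ({i} : Finset (Fin n)), gaussPdf m s (x j)
    simp [eval, scope, numTrees]
  | sum w₁ w₂ l r ihl ihr =>
    obtain ⟨hls, hsl, hsr⟩ := hsmooth
    obtain ⟨hdl, hdr⟩ := hdec
    obtain ⟨hw₁, hw₂, hpl, hpr⟩ := hpos
    obtain ⟨wl, ml, sl, hwl, hnl, hel⟩ := ihl hsl hdl hpl
    obtain ⟨wr, mr, sr, hwr, hnr, her⟩ := ihr hsr hdr hpr
    refine ⟨Fin.addCases (fun t => w₁ * wl t) (fun t => w₂ * wr t),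
      Fin.addCases ml mr, Fin.addCases sl sr, ?_, ?_, ?_⟩
    · intro t
      refine Fin.addCases (fun t => ?_) (fun t => ?_) t
      · simpa using mul_pos hw₁ (hwl t)
      · simpa using mul_pos hw₂ (hwr t)
    · rintro ⟨hn, hnl', hnr'⟩
      change ∑ t : Fin (l.numTrees + r.numTrees), _ = 1
      rw [Fin.sum_univ_add]
      simp only [Fin.addCases_left, Fin.addCases_right, ← Finset.mul_sum,
        hnl hnl', hnr hnr']
      linarith
    · intro x
      have hscope : (PC.sum w₁ w₂ l r).scope = l.scope := by
        simp [scope, hls]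
      change _ = ∑ t : Fin (l.numTrees + r.numTrees), _
      rw [hscope, Fin.sum_univ_add]
      simp only [Fin.addCases_left, Fin.addCases_right]
      have : ∑ i : Fin r.numTrees,
          w₂ * wr i * ∏ j ∈ l.scope, gaussPdf (mr i j) (sr i j) (x j)
          = w₂ * ∑ i : Fin r.numTrees,
            wr i * ∏ j ∈ r.scope, gaussPdf (mr i j) (sr i j) (x j) := by
        rw [Finset.mul_sum]
        exact Finset.sum_congr rfl fun i _ => by rw [hls, mul_assoc]
      rw [this, ← her x]
      have : ∑ i : Fin l.numTrees,
          w₁ * wl i * ∏ j ∈ l.scope, gaussPdf (ml i j) (sl i j) (x j)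
          = w₁ * ∑ i : Fin l.numTrees,
            wl i * ∏ j ∈ l.scope, gaussPdf (ml i j) (sl i j) (x j) := by
        rw [Finset.mul_sum]; exact Finset.sum_congr rfl fun i _ => by rw [mul_assoc]
      rw [this, ← hel x]
      rfl
  | prod l r ihl ihr =>
    obtain ⟨hsl, hsr⟩ := hsmooth
    obtain ⟨hdisj, hdl, hdr⟩ := hdec
    obtain ⟨hpl, hpr⟩ := hpos
    obtain ⟨wl, ml, sl, hwl, hnl, hel⟩ := ihl hsl hdl hpl
    obtain ⟨wr, mr, sr, hwr, hnr, her⟩ := ihr hsr hdr hpr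
    classical
    refine ⟨fun t => wl (finProdFinEquiv.symm t).1 * wr (finProdFinEquiv.symm t).2,
      fun t i => if i ∈ l.scope then ml (finProdFinEquiv.symm t).1 i
        else mr (finProdFinEquiv.symm t).2 i,
      fun t i => if i ∈ l.scope then sl (finProdFinEquiv.symm t).1 i
        else sr (finProdFinEquiv.symm t).2 i, ?_, ?_, ?_⟩
    · intro t; exact mul_pos (hwl _) (hwr _)
    · rintro ⟨hnl', hnr'⟩
      change ∑ t : Fin (l.numTrees * r.numTrees), _ = 1
      rw [← Equiv.sum_comp finProdFinEquiv]
      simp only [Equiv.symm_apply_apply]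
      rw [Fintype.sum_prod_type, ← Finset.sum_mul_sum, hnl hnl', hnr hnr', one_mul]
    · intro x
      rw [show (PC.prod l r).eval x = l.eval x * r.eval x from rfl, hel x, her x]
      change _ = ∑ t : Fin (l.numTrees * r.numTrees), _
      rw [← Equiv.sum_comp finProdFinEquiv]
      simp only [Equiv.symm_apply_apply]
      rw [Fintype.sum_prod_type, Finset.sum_mul_sum]
      refine Finset.sum_congr rfl fun a _ => Finset.sum_congr rfl fun b _ => ?_
      have hsc : (PC.prod l r).scope = l.scope ∪ r.scope := rfl
      rw [hsc, Finset.prod_union hdisj]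
      have h1 : ∏ i ∈ l.scope,
          gaussPdf (if i ∈ l.scope then ml a i else mr b i)
            (if i ∈ l.scope then sl a i else sr b i) (x i)
          = ∏ i ∈ l.scope, gaussPdf (ml a i) (sl a i) (x i) :=
        Finset.prod_congr rfl fun i hi => by simp [hi]
      have h2 : ∏ i ∈ r.scope,
          gaussPdf (if i ∈ l.scope then ml a i else mr b i)
            (if i ∈ l.scope then sl a i else sr b i) (x i)
          = ∏ i ∈ r.scope, gaussPdf (mr b i) (sr b i) (x i) := by
        refine Finset.prod_congr rfl fun i hi => ?_
        have : i ∉ l.scope := fun h => (Finset.disjoint_left.mp hdisj) h hi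
        simp [this]
      rw [h1, h2]; ring

end PC

/-- A smooth, decomposable probabilistic circuit with positive sum weights and Gaussian
leaves over all `n` variables equals a finite mixture, indexed by its induced trees, of
products of univariate Gaussian leaf densities; the mixture coefficients are positive and,
if the circuit is normalized, sum to one. -/
theorem pc_induced_tree_mixture {n : ℕ} (c : PC n)
    (hsmooth : c.Smooth) (hdec : c.Decomposable) (hpos : c.PosWeights)
    (hscope : c.scope = Finset.univ) :
    ∃ (w : Fin c.numTrees → ℝ) (m s : Fin c.numTrees → Fin n → ℝ),
      (∀ t, 0 < w t) ∧
      (c.Normalized → ∑ t, w t = 1) ∧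
      ∀ x : Fin n → ℝ, c.eval x = ∑ t, w t * ∏ i, gaussPdf (m t i) (s t i) (x i) := by
  obtain ⟨w, m, s, h1, h2, h3⟩ := PC.aux c hsmooth hdec hpos
  exact ⟨w, m, s, h1, h2, fun x => by rw [h3 x, hscope]⟩
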